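/- Let N ≥ 1 be an integer, let a = (a₁,…,a_N) ∈ ℂ^N with Re(a_i) > 0 for every i, let δ ∈ ℂ with Re(δ) > 0, and let x ∈ ℂ with |x| < Re(δ). Then the doubly-indexed family of terms (−1)^{k−1} x^k / (k · (δ + n·a)^k), indexed by n ∈ (ℤ_{≥0})^N and integers k ≥ N+1, is absolutely summable, and ∑_{n ∈ (ℤ_{≥0})^N} ∑_{k≥N+1} (−1)^{k−1} x^k / (k·(δ + n·a)^k) = ∑_{k≥N+1} (−1)^{k−1} (x^k/k) · ζ_N(k, δ | a). -/

import Mathlib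

open Finset

private lemma one_dim_summable {b c p : ℝ} (hb : 0 < b) (hc : 0 < c) (hp : 1 < p) :
    Summable fun m : ℕ => ((c + m * b) ^ p)⁻¹ := by
  rw [← summable_nat_add_iff 1]
  have hS : Summable fun m : ℕ => (b ^ p)⁻¹ * ((((m : ℕ) + 1 : ℕ) : ℝ) ^ p)⁻¹ := by
    apply Summable.mul_left
    exact (summable_nat_add_iff 1).2 (Real.summable_nat_rpow_inv.2 hp)
  apply hS.of_nonneg_of_le (fun m => by positivity)
  intro m
  have h0 : (0:ℝ) < ((m + 1 : ℕ) : ℝ) := by positivity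
  have key : (((m + 1 : ℕ) : ℝ) * b) ^ p ≤ (c + ((m + 1 : ℕ) : ℝ) * b) ^ p := by
    apply Real.rpow_le_rpow (by positivity) (by linarith [mul_pos h0 hb])
      (le_of_lt (lt_trans one_pos hp))
  have hmb : ((((m + 1 : ℕ) : ℝ)) * b) ^ p = (((m + 1 : ℕ) : ℝ)) ^ p * b ^ p :=
    Real.mul_rpow (by positivity) hb.le
  calc ((c + ((m + 1 : ℕ) : ℝ) * b) ^ p)⁻¹
      ≤ ((((m + 1 : ℕ) : ℝ) * b) ^ p)⁻¹ := by
        apply inv_anti₀ (Real.rpow_pos_of_pos (by positivity) p) key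
    _ = (b ^ p)⁻¹ * ((((m : ℕ) + 1 : ℕ) : ℝ) ^ p)⁻¹ := by
        rw [hmb, mul_inv, mul_comm]

private lemma pi_summable_prod : ∀ (N : ℕ) (g : Fin N → ℕ → ℝ), (∀ i, Summable (g i)) →
    (∀ i m, 0 ≤ g i m) → Summable fun n : Fin N → ℕ => ∏ i, g i (n i) := by
  intro N
  induction N with
  | zero =>
    intro g _ _
    haveI : Unique (Fin 0 → ℕ) := ⟨⟨finZeroElim⟩, fun f => funext fun i => i.elim0⟩
    haveI : Finite (Fin 0 → ℕ) := Finite.of_subsingleton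
    exact summable_of_finite_support (Set.toFinite _)
  | succ M ih =>
    intro g hg hg0
    have h0f : (0:ℕ→ℝ) ≤ g 0 := fun m => hg0 0 m
    have h0g : (0:(Fin M → ℕ)→ℝ) ≤ fun n : Fin M → ℕ => ∏ i, g i.succ (n i) :=
      fun q => Finset.prod_nonneg fun i _ => hg0 _ _
    have h2 := Summable.mul_of_nonneg (hg 0)
      (ih _ (fun i => hg i.succ) (fun i m => hg0 _ _)) h0f h0g
    rw [← (Fin.consEquiv (fun _ : Fin (M+1) => ℕ)).summable_iff]
    refine h2.congr fun q => ?_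
    simp [Function.comp, Fin.consEquiv, Fin.prod_univ_succ]

private lemma barnes_summable (N : ℕ) (hN : 1 ≤ N) (b : Fin N → ℝ) (hb : ∀ i, 0 < b i)
    {c : ℝ} (hc : 0 < c) :
    Summable fun n : Fin N → ℕ => ((c + ∑ i, (n i : ℝ) * b i) ^ (N + 1))⁻¹ := by
  have hN0 : (0:ℝ) < N := by exact_mod_cast hN
  set p : ℝ := (N + 1) / N with hp
  have hp1 : 1 < p := by rw [hp, lt_div_iff₀ hN0]; linarith
  have hp0 : 0 ≤ p := le_of_lt (lt_trans one_pos hp1)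
  have hpN : p * (N:ℝ) = (N:ℝ) + 1 := by
    rw [hp, div_mul_cancel₀]; exact ne_of_gt hN0
  have hpos : ∀ (i : Fin N) (m : ℕ), 0 < c + (m:ℝ) * b i := fun i m =>
    add_pos_of_pos_of_nonneg hc (mul_nonneg (Nat.cast_nonneg m) (hb i).le)
  have hmaj := pi_summable_prod N (fun i m => ((c + m * b i) ^ p)⁻¹)
    (fun i => one_dim_summable (hb i) hc hp1)
    (fun i m => inv_nonneg.2 (Real.rpow_nonneg (hpos i m).le p))
  apply hmaj.of_nonneg_of_le
  · intro n
    have hS0 : 0 ≤ ∑ i, (n i : ℝ) * b i :=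
      Finset.sum_nonneg fun i _ => mul_nonneg (Nat.cast_nonneg _) (hb i).le
    have hcS : 0 < c + ∑ i, (n i : ℝ) * b i := add_pos_of_pos_of_nonneg hc hS0
    exact inv_nonneg.2 (pow_nonneg hcS.le _)
  intro n
  have hS0 : 0 ≤ ∑ i, (n i : ℝ) * b i :=
    Finset.sum_nonneg fun i _ => mul_nonneg (Nat.cast_nonneg _) (hb i).le
  have hcS : 0 < c + ∑ i, (n i : ℝ) * b i := add_pos_of_pos_of_nonneg hc hS0
  have hterm : ∀ i : Fin N, (c + (n i : ℝ) * b i) ^ p ≤ (c + ∑ i, (n i : ℝ) * b i) ^ p := by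
    intro i
    apply Real.rpow_le_rpow (hpos i (n i)).le _ hp0
    have : (n i : ℝ) * b i ≤ ∑ i, (n i : ℝ) * b i :=
      Finset.single_le_sum (f := fun i => (n i : ℝ) * b i)
        (fun j _ => mul_nonneg (Nat.cast_nonneg _) (hb j).le) (Finset.mem_univ i)
    linarith
  calc ((c + ∑ i, (n i : ℝ) * b i) ^ (N + 1))⁻¹
      = (∏ _i : Fin N, (c + ∑ i, (n i : ℝ) * b i) ^ p)⁻¹ := by
        rw [Finset.prod_const, Finset.card_univ, Fintype.card_fin,
          ← Real.rpow_natCast ((c + ∑ i, (n i : ℝ) * b i) ^ p) N,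
          ← Real.rpow_mul hcS.le, hpN,
          ← Real.rpow_natCast (c + ∑ i, (n i : ℝ) * b i) (N + 1)]
        push_cast
        ring_nf
    _ ≤ (∏ i, (c + (n i : ℝ) * b i) ^ p)⁻¹ := by
        apply inv_anti₀
          (Finset.prod_pos fun i _ => Real.rpow_pos_of_pos (hpos i (n i)) p)
        exact Finset.prod_le_prod
          (fun i _ => (Real.rpow_pos_of_pos (hpos i (n i)) p).le) (fun i _ => hterm i)
    _ = ∏ i, ((c + (n i : ℝ) * b i) ^ p)⁻¹ := by rw [← Finset.prod_inv_distrib]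

/-- Let `N ≥ 1`, `a = (a₁,…,a_N)` with `Re(aᵢ) > 0`, `Re(δ) > 0`, and
`x ∈ ℂ` with `|x| < Re(δ)`.  Then the doubly-indexed family of terms
`(−1)^{k−1} xᵏ/(k·(δ + n·a)ᵏ)`, indexed by `n ∈ (ℤ_{≥0})ᴺ` and integers `k ≥ N+1`,
is absolutely summable, and
`∑_n ∑_{k≥N+1} (−1)^{k−1} xᵏ/(k·(δ + n·a)ᵏ) = ∑_{k≥N+1} (−1)^{k−1} (xᵏ/k)·ζ_N(k, δ|a)`,
where `ζ_N(k, δ | a) = ∑_n (δ + n·a)^{−k}`.  (Here `k = N + 1 + j` with `j : ℕ`.) -/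
theorem tail_series_rearrangement (N : ℕ) (hN : 1 ≤ N) (a : Fin N → ℂ)
    (ha : ∀ i, 0 < (a i).re) (δ : ℂ) (hδ : 0 < δ.re) (x : ℂ) (hx : ‖x‖ < δ.re) :
    (Summable fun p : (Fin N → ℕ) × ℕ =>
        ‖(-1 : ℂ) ^ (N + 1 + p.2 - 1) * x ^ (N + 1 + p.2) /
          ((N + 1 + p.2 : ℕ) * (δ + ∑ i, (p.1 i : ℂ) * a i) ^ (N + 1 + p.2))‖) ∧
    (∑' n : Fin N → ℕ, ∑' j : ℕ,
        (-1 : ℂ) ^ (N + 1 + j - 1) * x ^ (N + 1 + j) /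
          ((N + 1 + j : ℕ) * (δ + ∑ i, (n i : ℂ) * a i) ^ (N + 1 + j))) =
      ∑' j : ℕ,
        (-1 : ℂ) ^ (N + 1 + j - 1) * (x ^ (N + 1 + j) / (N + 1 + j : ℕ)) *
          ∑' n : Fin N → ℕ, ((δ + ∑ i, (n i : ℂ) * a i) ^ (N + 1 + j))⁻¹ := by
  have hx0 : 0 ≤ ‖x‖ := norm_nonneg x
  set z : (Fin N → ℕ) → ℂ := fun n => δ + ∑ i, (n i : ℂ) * a i with hz
  set R : (Fin N → ℕ) → ℝ := fun n => δ.re + ∑ i, (n i : ℝ) * (a i).re with hR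
  have hRe : ∀ n, (z n).re = R n := by
    intro n
    simp [hz, hR, Complex.add_re, Complex.re_sum, Complex.mul_re]
  have hRδ : ∀ n, δ.re ≤ R n := by
    intro n
    simp only [hR, le_add_iff_nonneg_right]
    exact Finset.sum_nonneg fun i _ => mul_nonneg (Nat.cast_nonneg _) (ha i).le
  have hR0 : ∀ n, 0 < R n := fun n => lt_of_lt_of_le hδ (hRδ n)
  have hzR : ∀ n, R n ≤ ‖z n‖ := by
    intro n
    rw [← hRe n]
    exact Complex.re_le_norm _
  set r : ℝ := ‖x‖ / δ.re with hr
  have hr0 : 0 ≤ r := div_nonneg hx0 hδ.le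
  have hr1 : r < 1 := (div_lt_one hδ).2 hx
  -- the majorant
  have hf0 : (0:(Fin N → ℕ)→ℝ) ≤ fun n => ‖x‖ ^ (N+1) * ((R n) ^ (N+1))⁻¹ :=
    fun n => mul_nonneg (pow_nonneg hx0 _) (inv_nonneg.2 (pow_nonneg (hR0 n).le _))
  have hg0 : (0:ℕ→ℝ) ≤ fun j => r ^ j := fun j => pow_nonneg hr0 j
  have hfs : Summable fun n : Fin N → ℕ => ‖x‖ ^ (N+1) * ((R n) ^ (N+1))⁻¹ :=
    Summable.mul_left _ (barnes_summable N hN (fun i => (a i).re) ha hδ)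
  have hgs : Summable fun j : ℕ => r ^ j := summable_geometric_of_lt_one hr0 hr1
  have hG := Summable.mul_of_nonneg hfs hgs hf0 hg0
  -- summability of the norms
  have hsum : Summable fun p : (Fin N → ℕ) × ℕ =>
      ‖(-1 : ℂ) ^ (N + 1 + p.2 - 1) * x ^ (N + 1 + p.2) /
        ((N + 1 + p.2 : ℕ) * z p.1 ^ (N + 1 + p.2))‖ := by
    apply hG.of_nonneg_of_le (fun p => norm_nonneg _)
    rintro ⟨n, j⟩
    have hk1 : (1:ℝ) ≤ ((N + 1 + j : ℕ) : ℝ) := by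
      have : 1 ≤ N + 1 + j := by omega
      exact_mod_cast this
    have hnorm : ‖(-1 : ℂ) ^ (N + 1 + j - 1) * x ^ (N + 1 + j) /
        ((N + 1 + j : ℕ) * z n ^ (N + 1 + j))‖
        = ‖x‖ ^ (N + 1 + j) / (((N + 1 + j : ℕ) : ℝ) * ‖z n‖ ^ (N + 1 + j)) := by
      rw [norm_div, norm_mul, norm_mul, norm_pow, norm_pow, norm_pow, norm_neg, norm_one,
        one_pow, one_mul, Complex.norm_natCast]
    rw [hnorm]
    have hden : (R n) ^ (N + 1 + j) ≤ ((N + 1 + j : ℕ) : ℝ) * ‖z n‖ ^ (N + 1 + j) := by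
      calc (R n) ^ (N + 1 + j) ≤ ‖z n‖ ^ (N + 1 + j) :=
            pow_le_pow_left₀ (hR0 n).le (hzR n) _
        _ ≤ ((N + 1 + j : ℕ) : ℝ) * ‖z n‖ ^ (N + 1 + j) :=
            le_mul_of_one_le_left (pow_nonneg (norm_nonneg _) _) hk1
    calc ‖x‖ ^ (N + 1 + j) / (((N + 1 + j : ℕ) : ℝ) * ‖z n‖ ^ (N + 1 + j))
        ≤ ‖x‖ ^ (N + 1 + j) / (R n) ^ (N + 1 + j) := by
          gcongr
          exact pow_pos (hR0 n) _
      _ = (‖x‖ / R n) ^ (N + 1 + j) := (div_pow _ _ _).symm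
      _ = (‖x‖ / R n) ^ (N + 1) * (‖x‖ / R n) ^ j := pow_add _ _ _
      _ ≤ (‖x‖ / R n) ^ (N + 1) * r ^ j := by
          gcongr
          all_goals first
            | exact pow_nonneg (div_nonneg hx0 (hR0 n).le) _
            | exact div_nonneg hx0 (hR0 n).le
            | (show ‖x‖ / R n ≤ ‖x‖ / δ.re
               exact div_le_div_of_nonneg_left hx0 hδ (hRδ n))
      _ = ‖x‖ ^ (N+1) * ((R n) ^ (N+1))⁻¹ * r ^ j := by
          rw [div_pow, div_eq_mul_inv]
  refine ⟨hsum, ?_⟩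
  -- the rearrangement
  have hF : Summable fun q : (Fin N → ℕ) × ℕ =>
      (-1 : ℂ) ^ (N + 1 + q.2 - 1) * x ^ (N + 1 + q.2) /
        ((N + 1 + q.2 : ℕ) * z q.1 ^ (N + 1 + q.2)) := hsum.of_norm
  have hcomm := Summable.tsum_comm (f := fun (n : Fin N → ℕ) (j : ℕ) =>
      (-1 : ℂ) ^ (N + 1 + j - 1) * x ^ (N + 1 + j) /
        ((N + 1 + j : ℕ) * z n ^ (N + 1 + j))) hF
  refine Eq.trans hcomm.symm ?_
  refine tsum_congr fun j => ?_
  have hpt : ∀ n : Fin N → ℕ,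
      (-1 : ℂ) ^ (N + 1 + j - 1) * x ^ (N + 1 + j) /
        ((N + 1 + j : ℕ) * z n ^ (N + 1 + j))
      = ((-1 : ℂ) ^ (N + 1 + j - 1) * (x ^ (N + 1 + j) / ((N + 1 + j : ℕ) : ℂ))) *
        (z n ^ (N + 1 + j))⁻¹ := by
    intro n
    rw [div_mul_eq_div_div, div_eq_mul_inv ((-1 : ℂ) ^ (N + 1 + j - 1) * x ^ (N + 1 + j) / _),
      mul_div_assoc]
  calc (∑' n : Fin N → ℕ, (-1 : ℂ) ^ (N + 1 + j - 1) * x ^ (N + 1 + j) /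
        ((N + 1 + j : ℕ) * z n ^ (N + 1 + j)))
      = ∑' n : Fin N → ℕ, ((-1 : ℂ) ^ (N + 1 + j - 1) *
          (x ^ (N + 1 + j) / ((N + 1 + j : ℕ) : ℂ))) * (z n ^ (N + 1 + j))⁻¹ :=
        tsum_congr hpt
    _ = (-1 : ℂ) ^ (N + 1 + j - 1) * (x ^ (N + 1 + j) / ((N + 1 + j : ℕ) : ℂ)) *
          ∑' n : Fin N → ℕ, (z n ^ (N + 1 + j))⁻¹ := tsum_mul_left
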